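/- Let C and D be categories, F₁ : C → C an endofunctor, and F₂ : C × D → D a functor. Let (W₁, s₁) be an initial F₁-algebra and (W₂, s₂) an initial algebra for the endofunctor F₂(W₁, −) : D → D. Then ((W₁, W₂), (s₁, s₂)) is an initial algebra for the endofunctor on C × D sending (X₁, X₂) to (F₁ X₁, F₂(X₁, X₂)). -/

import Mathlib

open CategoryTheory CategoryTheory.Limits

universe v u v₂ u₂

/-- The endofunctor on `C × D` sending `(X₁, X₂)` to `(F₁ X₁, F₂ (X₁, X₂))`. -/
@[simps]
def prodEndofunctor {C : Type u} [Category.{v} C] {D : Type u₂} [Category.{v₂} D]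
    (F₁ : C ⥤ C) (F₂ : C × D ⥤ D) : C × D ⥤ C × D where
  obj X := (F₁.obj X.1, F₂.obj X)
  map f := (F₁.map f.1, F₂.map f)
  map_id X := by simp [prod_id]
  map_comp f g := by
    dsimp
    exact Prod.ext (F₁.map_comp f.1 g.1) (F₂.map_comp f g)

/-- if `(W₁, s₁)` is an initial `F₁`-algebra and `(W₂, s₂)` an initial
`F₂(W₁, −)`-algebra, then `((W₁, W₂), (s₁, s₂))` is an initial algebra for the endofunctor
`(X₁, X₂) ↦ (F₁ X₁, F₂ (X₁, X₂))` on `C × D`. -/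
theorem initial_algebra_prod {C : Type u} [Category.{v} C] {D : Type u₂} [Category.{v₂} D]
    (F₁ : C ⥤ C) (F₂ : C × D ⥤ D)
    (W₁ : Endofunctor.Algebra F₁) (hW₁ : Nonempty (IsInitial W₁))
    (W₂ : Endofunctor.Algebra (Prod.sectR W₁.a D ⋙ F₂)) (hW₂ : Nonempty (IsInitial W₂)) :
    Nonempty (IsInitial
      (⟨(W₁.a, W₂.a), (W₁.str, W₂.str)⟩ : Endofunctor.Algebra (prodEndofunctor F₁ F₂))) := by
  obtain ⟨h₁⟩ := hW₁
  obtain ⟨h₂⟩ := hW₂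
  -- for each algebra `A`, the first-component algebra
  let A₁ : Endofunctor.Algebra (prodEndofunctor F₁ F₂) → Endofunctor.Algebra F₁ :=
    fun A => ⟨A.a.1, A.str.1⟩
  let f₁ : ∀ A, W₁ ⟶ A₁ A := fun A => h₁.to (A₁ A)
  -- second-component algebra, using the unique map on first components
  let A₂ : ∀ A : Endofunctor.Algebra (prodEndofunctor F₁ F₂),
      Endofunctor.Algebra (Prod.sectR W₁.a D ⋙ F₂) :=
    fun A => ⟨A.a.2, F₂.map ((f₁ A).f, 𝟙 A.a.2) ≫ A.str.2⟩
  let f₂ : ∀ A, W₂ ⟶ A₂ A := fun A => h₂.to (A₂ A)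
  refine ⟨IsInitial.ofUniqueHom (fun A => ?_) (fun A m => ?_)⟩
  · refine ⟨((f₁ A).f, (f₂ A).f), ?_⟩
    have hf1 : F₁.map (f₁ A).f ≫ A.str.1 = W₁.str ≫ (f₁ A).f := (f₁ A).h
    have hf2 := (f₂ A).h
    dsimp only [A₂] at hf2
    rw [Functor.comp_map] at hf2
    erw [← Category.assoc, ← F₂.map_comp] at hf2
    refine Prod.ext ?_ ?_
    · exact hf1
    · dsimp
      have hp : ((Prod.sectR W₁.a D).map (f₂ A).f ≫ ((f₁ A).f, 𝟙 A.a.2)) = ((f₁ A).f, (f₂ A).f) :=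
        Prod.ext (show 𝟙 W₁.a ≫ (f₁ A).f = (f₁ A).f from Category.id_comp _)
          (show (f₂ A).f ≫ 𝟙 A.a.2 = (f₂ A).f from Category.comp_id _)
      rw [hp] at hf2
      exact hf2
  · -- uniqueness
    have hm := m.h
    have hm1 : F₁.map m.f.1 ≫ A.str.1 = W₁.str ≫ m.f.1 := congrArg Prod.fst hm
    have hm2 : F₂.map m.f ≫ A.str.2 = W₂.str ≫ m.f.2 := congrArg Prod.snd hm
    let m₁ : W₁ ⟶ A₁ A := ⟨m.f.1, hm1⟩
    have e₁ : m.f.1 = (f₁ A).f := congrArg Endofunctor.Algebra.Hom.f (h₁.hom_ext m₁ (f₁ A))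
    have key : (Prod.sectR W₁.a D ⋙ F₂).map m.f.2 ≫ (A₂ A).str = W₂.str ≫ m.f.2 := by
      dsimp only [A₂]
      rw [Functor.comp_map]
      erw [← Category.assoc, ← F₂.map_comp]
      rw [← hm2]
      congr 2
      exact Prod.ext (show 𝟙 W₁.a ≫ (f₁ A).f = m.f.1 from (Category.id_comp _).trans e₁.symm)
        (show m.f.2 ≫ 𝟙 A.a.2 = m.f.2 from Category.comp_id _)
    let m₂ : W₂ ⟶ A₂ A := ⟨m.f.2, key⟩
    have e₂ : m.f.2 = (f₂ A).f := congrArg Endofunctor.Algebra.Hom.f (h₂.hom_ext m₂ (f₂ A))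
    apply Endofunctor.Algebra.Hom.ext
    exact Prod.ext e₁ e₂
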